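/- Let ε > 0, α > 0, T > 0, and let h : [0, T] → ℝ be differentiable with h(0) ≥ 0 and h′(t) ≥ −ε^{5/2}·e^{−(5/2)αt} − ε·e^{−αt}·h(t) for all t ∈ [0, T]. Then h(t) ≥ h(0)·e^{−ε/α} − (2/(5α))·ε^{5/2}·e^{ε/α} for all t ∈ [0, T]. -/

import Mathlib

/-- Lower bound for `h` in Lemma 3.4: if `h(0) ≥ 0` and
`h′(t) ≥ −ε^{5/2} e^{−(5/2)αt} − ε e^{−αt} h(t)` on `[0, T]`, then
`h(t) ≥ h(0) e^{−ε/α} − (2/(5α)) ε^{5/2} e^{ε/α}` on `[0, T]`. -/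
theorem average_mean_curvature_lower_bound
    (ε α T : ℝ) (hε : 0 < ε) (hα : 0 < α) (hT : 0 < T)
    (h h' : ℝ → ℝ)
    (hderiv : ∀ t ∈ Set.Icc (0 : ℝ) T, HasDerivWithinAt h (h' t) (Set.Icc 0 T) t)
    (h0 : 0 ≤ h 0)
    (hbound : ∀ t ∈ Set.Icc (0 : ℝ) T,
      -(ε ^ ((5 : ℝ) / 2)) * Real.exp (-(5 / 2) * α * t)
        - ε * Real.exp (-α * t) * h t ≤ h' t) :
    ∀ t ∈ Set.Icc (0 : ℝ) T,
      h 0 * Real.exp (-(ε / α)) - (2 / (5 * α)) * ε ^ ((5 : ℝ) / 2) * Real.exp (ε / α)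
        ≤ h t := by
  set C : ℝ := (2 / (5 * α)) * ε ^ ((5 : ℝ) / 2) with hC
  have hCpos : 0 < C := by
    apply mul_pos (by positivity)
    exact Real.rpow_pos_of_pos hε _
  -- integrating factor φ t = exp(-(ε/α) * exp(-α t))
  set φ : ℝ → ℝ := fun t => Real.exp (-(ε / α) * Real.exp (-α * t)) with hφdef
  have hφderiv : ∀ t : ℝ, HasDerivAt φ (ε * Real.exp (-α * t) * φ t) t := by
    intro t
    have h1 : HasDerivAt (fun t : ℝ => -α * t) (-α) t := by
      simpa using (hasDerivAt_id t).const_mul (-α)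
    have h2 := h1.exp
    have h3 := (h2.const_mul (-(ε / α))).exp
    convert h3 using 1
    simp only [hφdef]
    field_simp
  -- define G t = h t * φ t + C * (1 - exp(-(5/2) α t)); it is monotone on [0,T]
  set G : ℝ → ℝ := fun t => h t * φ t + C * (1 - Real.exp (-(5 / 2) * α * t)) with hG
  set G' : ℝ → ℝ := fun t =>
    (h' t + ε * Real.exp (-α * t) * h t) * φ t + ε ^ ((5 : ℝ) / 2) * Real.exp (-(5 / 2) * α * t)
    with hG'
  have hGderiv : ∀ t ∈ Set.Icc (0 : ℝ) T, HasDerivWithinAt G (G' t) (Set.Icc 0 T) t := by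
    intro t ht
    have hhφ : HasDerivWithinAt (fun t => h t * φ t)
        (h' t * φ t + h t * (ε * Real.exp (-α * t) * φ t)) (Set.Icc 0 T) t :=
      (hderiv t ht).mul ((hφderiv t).hasDerivWithinAt)
    have hlin : HasDerivAt (fun t : ℝ => -(5 / 2) * α * t) (-(5 / 2) * α) t := by
      simpa using (hasDerivAt_id t).const_mul (-(5 / 2) * α)
    have hexp := hlin.exp
    have hlast : HasDerivAt (fun t : ℝ => C * (1 - Real.exp (-(5 / 2) * α * t)))
        (ε ^ ((5 : ℝ) / 2) * Real.exp (-(5 / 2) * α * t)) t := by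
      have := ((hasDerivAt_const t (1 : ℝ)).sub hexp).const_mul C
      refine this.congr_deriv ?_
      rw [hC]
      field_simp
      ring
    have := hhφ.add hlast.hasDerivWithinAt
    refine this.congr_deriv ?_
    simp only [hG']
    ring
  have hG'nonneg : ∀ t ∈ Set.Icc (0 : ℝ) T, 0 ≤ G' t := by
    intro t ht
    have ht0 : 0 ≤ t := ht.1
    have hφpos : 0 < φ t := Real.exp_pos _
    have hφle1 : φ t ≤ 1 := by
      apply Real.exp_le_one_iff.mpr
      have : 0 < Real.exp (-α * t) := Real.exp_pos _
      nlinarith [div_pos hε hα]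
    have hb := hbound t ht
    have hBpos : 0 < ε ^ ((5 : ℝ) / 2) * Real.exp (-(5 / 2) * α * t) :=
      mul_pos (Real.rpow_pos_of_pos hε _) (Real.exp_pos _)
    simp only [hG']
    nlinarith [mul_nonneg (by nlinarith : (0:ℝ) ≤ h' t + ε * Real.exp (-α * t) * h t +
        ε ^ ((5 : ℝ) / 2) * Real.exp (-(5 / 2) * α * t)) hφpos.le,
      mul_nonneg hBpos.le (by linarith : (0:ℝ) ≤ 1 - φ t)]
  have hGcont : ContinuousOn G (Set.Icc 0 T) := fun t ht =>
    ((hGderiv t ht).continuousWithinAt)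
  have hmono : MonotoneOn G (Set.Icc (0 : ℝ) T) := by
    apply monotoneOn_of_hasDerivWithinAt_nonneg (convex_Icc 0 T) hGcont
    · intro x hx
      exact (hGderiv x (interior_subset hx)).mono interior_subset
    · intro x hx
      exact hG'nonneg x (interior_subset hx)
  intro t ht
  have ht0 : (0:ℝ) ∈ Set.Icc (0 : ℝ) T := ⟨le_refl _, hT.le⟩
  have hGt := hmono ht0 ht ht.1
  -- unfold G 0 and G t
  have hG0 : G 0 = h 0 * Real.exp (-(ε / α)) := by
    simp [hG, hφdef]
  rw [hG0] at hGt
  -- now conclude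
  have hφpos : 0 < φ t := Real.exp_pos _
  have hφle1 : φ t ≤ 1 := by
    apply Real.exp_le_one_iff.mpr
    have : 0 < Real.exp (-α * t) := Real.exp_pos _
    nlinarith [div_pos hε hα, ht.1, Real.exp_pos (-α * t)]
  have hφge : Real.exp (-(ε / α)) ≤ φ t := by
    apply Real.exp_le_exp.mpr
    have he1 : Real.exp (-α * t) ≤ 1 := by
      apply Real.exp_le_one_iff.mpr
      nlinarith [ht.1]
    nlinarith [div_pos hε hα, Real.exp_pos (-α * t)]
  have hexps : Real.exp (-(ε / α)) * Real.exp (ε / α) = 1 := by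
    rw [← Real.exp_add]; simp
  have he2pos : 0 < Real.exp (ε / α) := Real.exp_pos _
  have he2ge1 : 1 ≤ Real.exp (ε / α) := Real.one_le_exp (by positivity)
  have hexpfac : 0 < Real.exp (-(5 / 2) * α * t) := Real.exp_pos _
  have hexpfac1 : Real.exp (-(5 / 2) * α * t) ≤ 1 := by
    apply Real.exp_le_one_iff.mpr
    nlinarith [ht.1]
  have hkey : h 0 * Real.exp (-(ε / α)) - C ≤ h t * φ t := by
    simp only [hG] at hGt
    nlinarith
  have hene : 0 < Real.exp (-(ε / α)) := Real.exp_pos _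
  rcases le_or_gt 0 (h t) with hpos | hneg
  · have h1 : h t * φ t ≤ h t := by
      calc h t * φ t ≤ h t * 1 := mul_le_mul_of_nonneg_left hφle1 hpos
        _ = h t := mul_one _
    have h2 : C ≤ C * Real.exp (ε / α) := le_mul_of_one_le_right hCpos.le he2ge1
    linarith
  · have h1 : h t * φ t ≤ h t * Real.exp (-(ε / α)) :=
      mul_le_mul_of_nonpos_left hφge hneg.le
    have h2 : h 0 * Real.exp (-(ε / α)) - C ≤ h t * Real.exp (-(ε / α)) := le_trans hkey h1
    have h3 := mul_le_mul_of_nonneg_right h2 he2pos.le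
    have h4 : h t * Real.exp (-(ε / α)) * Real.exp (ε / α) = h t := by
      rw [mul_assoc, hexps, mul_one]
    have h5 : (h 0 * Real.exp (-(ε / α)) - C) * Real.exp (ε / α)
        = h 0 - C * Real.exp (ε / α) := by
      rw [sub_mul, mul_assoc, hexps, mul_one]
    rw [h4, h5] at h3
    have h6 : h 0 * Real.exp (-(ε / α)) ≤ h 0 := by
      have hq : 0 ≤ ε / α := by positivity
      have he : Real.exp (-(ε / α)) ≤ 1 := Real.exp_le_one_iff.mpr (by linarith)
      calc h 0 * Real.exp (-(ε / α)) ≤ h 0 * 1 := mul_le_mul_of_nonneg_left he h0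
        _ = h 0 := mul_one _
    linarith
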